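/- For each integer n ≥ 1, the set {f ∈ B₁⁰ : c_n(f) ≠ 0} is open and dense in B₁⁰ with respect to the sup-norm topology of H^∞; equivalently, the zero-set Z = {f ∈ B₁⁰ : c_n(f) = 0} is nowhere dense in B₁⁰. -/

import Mathlib

open Metric Complex Real

/-- The `n`-th Taylor coefficient of `f` at `0`. -/
noncomputable def taylorCoeff (f : ℂ → ℂ) (n : ℕ) : ℂ :=
  iteratedDeriv n f 0 / n.factorial

/-- The class `B₁⁰` of functions holomorphic and nonvanishing on an open
neighborhood of the closed unit disk with `sup_Δ |f| < 1`. -/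
def B10 : Set (ℂ → ℂ) :=
  {f | ∃ U : Set ℂ, IsOpen U ∧ Metric.closedBall (0 : ℂ) 1 ⊆ U ∧
    DifferentiableOn ℂ f U ∧ (∀ z ∈ U, f z ≠ 0) ∧
    ∃ m < (1 : ℝ), ∀ z ∈ Metric.ball (0 : ℂ) 1, ‖f z‖ ≤ m}

lemma taylorCoeff_eq_cauchy {f : ℂ → ℂ} {p : FormalMultilinearSeries ℂ ℂ ℂ} {r : ENNReal}
    (h : HasFPowerSeriesOnBall f p 0 r) (n : ℕ) :
    taylorCoeff f n = p n (fun _ ↦ 1) := by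
  have h1 := h.factorial_smul (1 : ℂ) n
  rw [taylorCoeff, iteratedDeriv_eq_iteratedFDeriv, ← h1, nsmul_eq_mul,
    mul_div_cancel_left₀]
  exact_mod_cast n.factorial_ne_zero

lemma iteratedDerivWithin_of_isOpen' {s : Set ℂ} (hs : IsOpen s) {x : ℂ} (hx : x ∈ s)
    (f : ℂ → ℂ) (n : ℕ) : iteratedDerivWithin n f s x = iteratedDeriv n f x := by
  simp only [iteratedDerivWithin, iteratedDeriv, iteratedFDerivWithin_of_isOpen n hs hx]

lemma deriv_iterate_poly (k : ℕ) (p : Polynomial ℂ) :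
    deriv^[k] (fun z => p.eval z) = fun z => (Polynomial.derivative^[k] p).eval z := by
  induction k generalizing p with
  | zero => simp
  | succ k ih =>
    rw [Function.iterate_succ_apply, Function.iterate_succ_apply,
      show deriv (fun z => p.eval z) = fun z => (Polynomial.derivative p).eval z from
        funext fun z => by simp]
    exact ih _

lemma iteratedDeriv_monomial (n : ℕ) :
    iteratedDeriv n (fun z : ℂ => z ^ n) 0 = n.factorial := by
  have h : (fun z : ℂ => z ^ n) = fun z => (Polynomial.X ^ n : Polynomial ℂ).eval z := by simp
  rw [iteratedDeriv_eq_iterate, h, deriv_iterate_poly]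
  simp [Polynomial.iterate_derivative_X_pow_eq_smul, Nat.descFactorial_self]

lemma taylorCoeff_add {f g : ℂ → ℂ} (n : ℕ)
    (hf : ContDiffOn ℂ n f (ball (0:ℂ) 1)) (hg : ContDiffOn ℂ n g (ball (0:ℂ) 1)) :
    taylorCoeff (fun z => f z + g z) n = taylorCoeff f n + taylorCoeff g n := by
  have hx : (0:ℂ) ∈ ball (0:ℂ) 1 := mem_ball_self one_pos
  have hu : UniqueDiffOn ℂ (ball (0:ℂ) 1) := isOpen_ball.uniqueDiffOn
  unfold taylorCoeff
  rw [← iteratedDerivWithin_of_isOpen' isOpen_ball hx f n,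
    ← iteratedDerivWithin_of_isOpen' isOpen_ball hx g n,
    ← iteratedDerivWithin_of_isOpen' isOpen_ball hx _ n,
    show (fun z => f z + g z) = f + g from rfl,
    iteratedDerivWithin_add hx hu (hf.contDiffWithinAt hx) (hg.contDiffWithinAt hx), add_div]

lemma taylorCoeff_sub {f g : ℂ → ℂ} (n : ℕ)
    (hf : ContDiffOn ℂ n f (ball (0:ℂ) 1)) (hg : ContDiffOn ℂ n g (ball (0:ℂ) 1)) :
    taylorCoeff (fun z => f z - g z) n = taylorCoeff f n - taylorCoeff g n := by
  have hx : (0:ℂ) ∈ ball (0:ℂ) 1 := mem_ball_self one_pos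
  have hu : UniqueDiffOn ℂ (ball (0:ℂ) 1) := isOpen_ball.uniqueDiffOn
  unfold taylorCoeff
  rw [← iteratedDerivWithin_of_isOpen' isOpen_ball hx f n,
    ← iteratedDerivWithin_of_isOpen' isOpen_ball hx g n,
    ← iteratedDerivWithin_of_isOpen' isOpen_ball hx _ n,
    show (fun z => f z - g z) = f - g from rfl,
    iteratedDerivWithin_sub hx hu (hf.contDiffWithinAt hx) (hg.contDiffWithinAt hx), sub_div]

lemma taylorCoeff_const_mul {f : ℂ → ℂ} (n : ℕ) (c : ℂ)
    (hf : ContDiffOn ℂ n f (ball (0:ℂ) 1)) :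
    taylorCoeff (fun z => c * f z) n = c * taylorCoeff f n := by
  have hx : (0:ℂ) ∈ ball (0:ℂ) 1 := mem_ball_self one_pos
  have hu : UniqueDiffOn ℂ (ball (0:ℂ) 1) := isOpen_ball.uniqueDiffOn
  unfold taylorCoeff
  rw [← iteratedDerivWithin_of_isOpen' isOpen_ball hx f n,
    ← iteratedDerivWithin_of_isOpen' isOpen_ball hx _ n,
    iteratedDerivWithin_const_mul hx hu c (hf.contDiffWithinAt hx), mul_div_assoc]

lemma taylorCoeff_norm_le {h : ℂ → ℂ} {ε : ℝ} (hd : DifferentiableOn ℂ h (closedBall (0:ℂ) 1))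
    (hc : ∀ z ∈ sphere (0:ℂ) 1, ‖h z‖ ≤ ε) (n : ℕ) :
    ‖taylorCoeff h n‖ ≤ ε := by
  have hd' : DifferentiableOn ℂ h (closedBall (0:ℂ) ((1:NNReal):ℝ)) := by
    simpa using hd
  have hp : HasFPowerSeriesOnBall h (cauchyPowerSeries h 0 ((1:NNReal):ℝ)) 0 (1:NNReal) :=
    hd'.hasFPowerSeriesOnBall one_pos
  rw [taylorCoeff_eq_cauchy hp n]
  calc ‖(cauchyPowerSeries h 0 ((1:NNReal):ℝ) n) (fun _ ↦ (1:ℂ))‖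
      ≤ ‖cauchyPowerSeries h 0 ((1:NNReal):ℝ) n‖ * ∏ _i : Fin n, ‖(1:ℂ)‖ :=
        (cauchyPowerSeries h 0 _ n).le_opNorm _
    _ = ‖cauchyPowerSeries h 0 1 n‖ := by simp
    _ ≤ ((2 * π)⁻¹ * ∫ θ : ℝ in (0)..2 * π, ‖h (circleMap 0 1 θ)‖) * |(1:ℝ)|⁻¹ ^ n := by
        simpa using norm_cauchyPowerSeries_le h 0 1 n
    _ ≤ ε := by
        have hint : IntervalIntegrable (fun θ : ℝ => ‖h (circleMap 0 1 θ)‖)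
            MeasureTheory.volume 0 (2 * π) := by
          apply ContinuousOn.intervalIntegrable
          apply ContinuousOn.norm
          apply hd.continuousOn.comp (continuous_circleMap 0 1).continuousOn
          intro θ _
          exact sphere_subset_closedBall (circleMap_mem_sphere 0 zero_le_one θ)
        have hmono : (∫ θ : ℝ in (0)..2 * π, ‖h (circleMap 0 1 θ)‖) ≤
            ∫ _θ : ℝ in (0)..2 * π, ε := by
          apply intervalIntegral.integral_mono_on two_pi_pos.le hint intervalIntegrable_const
          intro θ _
          exact hc _ (circleMap_mem_sphere 0 zero_le_one θ)
        have h2 : (∫ _θ : ℝ in (0)..2 * π, ε) = 2 * π * ε := by simp [mul_comm]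
        rw [abs_one, inv_one, one_pow, mul_one]
        calc (2 * π)⁻¹ * ∫ θ : ℝ in (0)..2 * π, ‖h (circleMap 0 1 θ)‖
            ≤ (2 * π)⁻¹ * (2 * π * ε) := by
              apply mul_le_mul_of_nonneg_left _ (by positivity)
              rw [← h2]; exact hmono
          _ = ε := by field_simp

/-- For each `n ≥ 1`, the set `{f ∈ B₁⁰ : c_n(f) ≠ 0}` is open and dense in
`B₁⁰` for the sup-norm topology of `H^∞`; equivalently, the zero-set
`{f ∈ B₁⁰ : c_n(f) = 0}` is nowhere dense in `B₁⁰`. -/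
theorem coeff_nonzero_open_dense (n : ℕ) (hn : 1 ≤ n) :
    (∀ f ∈ B10, taylorCoeff f n ≠ 0 →
      ∃ ε > (0 : ℝ), ∀ g ∈ B10,
        (∀ z ∈ Metric.ball (0 : ℂ) 1, ‖g z - f z‖ < ε) →
        taylorCoeff g n ≠ 0) ∧
    (∀ f ∈ B10, ∀ ε > (0 : ℝ), ∃ g ∈ B10,
      (∀ z ∈ Metric.ball (0 : ℂ) 1, ‖g z - f z‖ < ε) ∧
      taylorCoeff g n ≠ 0) := by
  constructor
  · -- openness
    rintro f ⟨U, hUo, hUsub, hUdiff, -, -⟩ hcn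
    refine ⟨‖taylorCoeff f n‖ / 2, div_pos (norm_pos_iff.mpr hcn) two_pos, ?_⟩
    rintro g ⟨V, hVo, hVsub, hVdiff, -, -⟩ hclose
    have hdh : DifferentiableOn ℂ (fun z => g z - f z) (closedBall (0:ℂ) 1) :=
      (hVdiff.mono hVsub).sub (hUdiff.mono hUsub)
    have hsb : ∀ z ∈ sphere (0:ℂ) 1, ‖g z - f z‖ ≤ ‖taylorCoeff f n‖ / 2 := by
      intro z hz
      have hzc : z ∈ closedBall (0:ℂ) 1 := sphere_subset_closedBall hz
      have hg' : ContinuousAt g z :=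
        (hVdiff.differentiableAt (hVo.mem_nhds (hVsub hzc))).continuousAt
      have hf' : ContinuousAt f z :=
        (hUdiff.differentiableAt (hUo.mem_nhds (hUsub hzc))).continuousAt
      have hcont : ContinuousAt (fun w => ‖g w - f w‖) z := (hg'.sub hf').norm
      have hzcl : z ∈ closure (ball (0:ℂ) 1) := by
        rw [closure_ball (0:ℂ) one_ne_zero]; exact hzc
      haveI hne : (nhdsWithin z (ball (0:ℂ) 1)).NeBot :=
        mem_closure_iff_nhdsWithin_neBot.mp hzcl
      refine le_of_tendsto (hcont.tendsto.mono_left (nhdsWithin_le_nhds (s := ball (0:ℂ) 1))) ?_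
      filter_upwards [self_mem_nhdsWithin] with w hw
      have := hclose w hw
      exact this.le
    have hb := taylorCoeff_norm_le hdh hsb n
    have hfC : ContDiffOn ℂ n f (ball (0:ℂ) 1) :=
      (hUdiff.mono (ball_subset_closedBall.trans hUsub)).contDiffOn isOpen_ball
    have hgC : ContDiffOn ℂ n g (ball (0:ℂ) 1) :=
      (hVdiff.mono (ball_subset_closedBall.trans hVsub)).contDiffOn isOpen_ball
    have hsub : taylorCoeff (fun z => g z - f z) n = taylorCoeff g n - taylorCoeff f n :=
      taylorCoeff_sub n hgC hfC
    intro h0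
    rw [hsub, h0, zero_sub, norm_neg] at hb
    have := norm_pos_iff.mpr hcn
    linarith
  · -- density
    rintro f ⟨U, hUo, hUsub, hUdiff, hUne, m, hm1, hm⟩ ε hε
    by_cases hc : taylorCoeff f n ≠ 0
    · exact ⟨f, ⟨U, hUo, hUsub, hUdiff, hUne, m, hm1, hm⟩,
        fun z _ => by simpa using hε, hc⟩
    push_neg at hc
    -- minimum of |f| on the closed disk
    have hcpt : IsCompact (closedBall (0:ℂ) 1) := isCompact_closedBall _ _
    have hfcont : ContinuousOn (fun z => ‖f z‖) (closedBall (0:ℂ) 1) :=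
      continuous_norm.comp_continuousOn ((hUdiff.mono hUsub).continuousOn)
    obtain ⟨z₀, hz₀, hmin⟩ := hcpt.exists_isMinOn
      ⟨0, mem_closedBall_self zero_le_one⟩ hfcont
    have ha : 0 < ‖f z₀‖ :=
      norm_pos_iff.mpr (hUne z₀ (hUsub hz₀))
    set a : ℝ := ‖f z₀‖ with ha_def
    set δ : ℝ := min (min (ε/2) ((1-m)/2)) (a/2) with hδ_def
    have hδpos : 0 < δ := by
      apply lt_min (lt_min (by linarith) (by linarith)) (by linarith)
    have hδε : δ < ε := by
      have := min_le_left (min (ε/2) ((1-m)/2)) (a/2)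
      have := min_le_left (ε/2) ((1-m)/2)
      simp only [hδ_def]
      have h1 : min (min (ε/2) ((1-m)/2)) (a/2) ≤ ε/2 :=
        le_trans (min_le_left _ _) (min_le_left _ _)
      linarith
    have hδm : δ ≤ (1-m)/2 :=
      le_trans (min_le_left _ _) (min_le_right _ _)
    have hδa : δ < a := by
      have : δ ≤ a/2 := min_le_right _ _
      linarith
    -- abs of perturbation
    have habs : ∀ z : ℂ, ‖(δ:ℂ) * z ^ n‖ = δ * ‖z‖ ^ n := by
      intro z
      rw [norm_mul, norm_pow, Complex.norm_real, Real.norm_of_nonneg hδpos.le]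
    have habs_le : ∀ z : ℂ, ‖z‖ ≤ 1 → ‖(δ:ℂ) * z ^ n‖ ≤ δ := by
      intro z hz
      rw [habs z]
      have : ‖z‖ ^ n ≤ 1 := pow_le_one₀ (norm_nonneg z) hz
      nlinarith
    refine ⟨fun z => f z + (δ:ℂ) * z ^ n, ?_, ?_, ?_⟩
    · -- membership in B10
      refine ⟨U ∩ {z | ‖(δ:ℂ) * z ^ n‖ < ‖f z‖}, ?_, ?_, ?_, ?_, ?_⟩
      · have : U ∩ {z | ‖(δ:ℂ) * z ^ n‖ < ‖f z‖} =
            U ∩ (fun z => ‖f z‖ - ‖(δ:ℂ) * z ^ n‖) ⁻¹' Set.Ioi 0 := by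
          ext z; simp [Set.mem_setOf_eq, sub_pos]
        rw [this]
        apply ContinuousOn.isOpen_inter_preimage _ hUo isOpen_Ioi
        exact (continuous_norm.comp_continuousOn hUdiff.continuousOn).sub
          (continuous_norm.comp
            ((continuous_const.mul (continuous_pow n)))).continuousOn
      · intro z hz
        refine ⟨hUsub hz, ?_⟩
        have hz1 : ‖z‖ ≤ 1 := by
          simpa [Complex.dist_eq] using mem_closedBall.mp hz
        have h1 : ‖(δ:ℂ) * z ^ n‖ ≤ δ := habs_le z hz1
        have h2 : a ≤ ‖f z‖ := hmin hz
        exact lt_of_le_of_lt h1 (lt_of_lt_of_le hδa h2)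
      · exact (hUdiff.mono Set.inter_subset_left).add
          ((differentiable_const ((δ:ℂ))).mul (differentiable_pow n)).differentiableOn
      · rintro z ⟨-, hz2⟩ h0
        have : f z = -((δ:ℂ) * z ^ n) := by linear_combination h0
        rw [Set.mem_setOf_eq, this, norm_neg] at hz2
        exact lt_irrefl _ hz2
      · refine ⟨m + δ, by linarith, ?_⟩
        intro z hz
        have hz1 : ‖z‖ ≤ 1 := by
          simpa [Complex.dist_eq] using (mem_ball.mp hz).le
        calc ‖f z + (δ:ℂ) * z ^ n‖
            ≤ ‖f z‖ + ‖(δ:ℂ) * z ^ n‖ := norm_add_le _ _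
          _ ≤ m + δ := add_le_add (hm z hz) (habs_le z hz1)
    · -- closeness
      intro z hz
      have hz1 : ‖z‖ ≤ 1 := by
        simpa [Complex.dist_eq] using (mem_ball.mp hz).le
      have : f z + (δ:ℂ) * z ^ n - f z = (δ:ℂ) * z ^ n := by ring
      rw [this]
      exact lt_of_le_of_lt (habs_le z hz1) hδε
    · -- nonvanishing coefficient
      have hfC : ContDiffOn ℂ n f (ball (0:ℂ) 1) :=
        (hUdiff.mono (ball_subset_closedBall.trans hUsub)).contDiffOn isOpen_ball
      have hmonC : ContDiffOn ℂ n (fun z : ℂ => (δ:ℂ) * z ^ n) (ball (0:ℂ) 1) :=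
        (contDiff_const.mul (contDiff_id.pow n)).contDiffOn
      have hpowC : ContDiffOn ℂ n (fun z : ℂ => z ^ n) (ball (0:ℂ) 1) :=
        (contDiff_id.pow n).contDiffOn
      rw [taylorCoeff_add n hfC hmonC, hc, zero_add,
        taylorCoeff_const_mul n _ hpowC]
      have hpow : taylorCoeff (fun z : ℂ => z ^ n) n = 1 := by
        rw [taylorCoeff, iteratedDeriv_monomial, div_self]
        exact_mod_cast n.factorial_ne_zero
      rw [hpow, mul_one]
      exact_mod_cast hδpos.ne'
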